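/- Let S ∈ ℝ^{n×n} be symmetric positive definite and B ∈ ℝ^{m×n} with B Bᵀ = 2 I_m. Define F := B S^{−1} Bᵀ and M := (1/4) B S Bᵀ. Then for every λ ∈ ℝ^m: λᵀ M^{−1} λ = 4 sup_{w ∈ ℝ^m, w≠0} (wᵀ Bᵀ λ)² / ‖Bᵀ B w‖²_S ≤ sup_{v ∈ ℝⁿ, v≠0} (vᵀ Bᵀ λ)² / ‖v‖²_S = λᵀ B S^{−1} Bᵀ λ = λᵀ F λ, i.e., M^{−1} ≤ F in the Loewner order. -/

import Mathlib

open Matrix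

/-- `‖v‖²_S`. -/
noncomputable def Snorm2 {n : ℕ} (S : Matrix (Fin n) (Fin n) ℝ) (v : Fin n → ℝ) : ℝ :=
  v ⬝ᵥ S.mulVec v

section Aux

variable {k : ℕ}

lemma herm_symm_dot {A : Matrix (Fin k) (Fin k) ℝ} (hA : A.IsHermitian) (x y : Fin k → ℝ) :
    x ⬝ᵥ A.mulVec y = y ⬝ᵥ A.mulVec x := by
  have ht : Aᵀ = A := by
    rw [← A.conjTranspose_eq_transpose_of_trivial, hA.eq]
  rw [dotProduct_mulVec, ← mulVec_transpose, ht, dotProduct_comm]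

lemma cs_aux {A : Matrix (Fin k) (Fin k) ℝ} (hA : A.PosDef) (x y : Fin k → ℝ) :
    (x ⬝ᵥ A.mulVec y) ^ 2 ≤ (x ⬝ᵥ A.mulVec x) * (y ⬝ᵥ A.mulVec y) := by
  have key : ∀ t : ℝ, 0 ≤ (y ⬝ᵥ A.mulVec y) * (t * t) + (2 * (x ⬝ᵥ A.mulVec y)) * t +
      (x ⬝ᵥ A.mulVec x) := by
    intro t
    have h0 := hA.posSemidef.dotProduct_mulVec_nonneg (x + t • y)
    have hsymm := herm_symm_dot hA.1 y x
    simp only [star_trivial, mulVec_add, mulVec_smul, dotProduct_add, add_dotProduct,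
      dotProduct_smul, smul_dotProduct, smul_eq_mul] at h0
    rw [hsymm] at h0
    nlinarith [h0]
  have hd := discrim_le_zero key
  rw [discrim] at hd
  nlinarith [hd]

/-- bound: for `A` SPD, `(v⬝u)²/(v⬝Av) ≤ u⬝A⁻¹u` for all `v`. -/
lemma rayleigh_bound {A : Matrix (Fin k) (Fin k) ℝ} (hA : A.PosDef) (u v : Fin k → ℝ) :
    (v ⬝ᵥ u) ^ 2 / (v ⬝ᵥ A.mulVec v) ≤ u ⬝ᵥ A⁻¹.mulVec u := by
  have hinv : A.mulVec (A⁻¹.mulVec u) = u := by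
    rw [mulVec_mulVec, Matrix.mul_nonsing_inv _ hA.det_pos.ne'.isUnit, one_mulVec]
  have hsym : (A⁻¹.mulVec u) ⬝ᵥ A.mulVec (A⁻¹.mulVec u) = u ⬝ᵥ A⁻¹.mulVec u := by
    rw [hinv, dotProduct_comm]
  rcases eq_or_ne v 0 with rfl | hv
  · simpa using hA.inv.posSemidef.dotProduct_mulVec_nonneg u
  · have hpos : 0 < v ⬝ᵥ A.mulVec v := by simpa using hA.dotProduct_mulVec_pos hv
    rw [div_le_iff₀ hpos]
    calc (v ⬝ᵥ u) ^ 2 = (v ⬝ᵥ A.mulVec (A⁻¹.mulVec u)) ^ 2 := by rw [hinv]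
      _ ≤ (v ⬝ᵥ A.mulVec v) * ((A⁻¹.mulVec u) ⬝ᵥ A.mulVec (A⁻¹.mulVec u)) := cs_aux hA v _
      _ = u ⬝ᵥ A⁻¹.mulVec u * (v ⬝ᵥ A.mulVec v) := by rw [hsym]; ring

end Aux

lemma rayleigh_sup {A : Matrix (Fin k) (Fin k) ℝ} (hA : A.PosDef) (u : Fin k → ℝ) :
    (⨆ v : {v : Fin k → ℝ // v ≠ 0}, (v.1 ⬝ᵥ u) ^ 2 / (v.1 ⬝ᵥ A.mulVec v.1)) =
      u ⬝ᵥ A⁻¹.mulVec u := by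
  have hbdd : BddAbove (Set.range fun v : {v : Fin k → ℝ // v ≠ 0} =>
      (v.1 ⬝ᵥ u) ^ 2 / (v.1 ⬝ᵥ A.mulVec v.1)) := by
    refine ⟨u ⬝ᵥ A⁻¹.mulVec u, ?_⟩
    rintro x ⟨v, rfl⟩
    exact rayleigh_bound hA u v.1
  have hRnn : 0 ≤ u ⬝ᵥ A⁻¹.mulVec u := by simpa using hA.inv.posSemidef.dotProduct_mulVec_nonneg u
  refine le_antisymm (Real.iSup_le (fun v => rayleigh_bound hA u v.1) hRnn) ?_
  rcases eq_or_ne u 0 with rfl | hu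
  · have h0 : (0 : Fin k → ℝ) ⬝ᵥ A⁻¹.mulVec 0 = 0 := by simp
    rw [h0]
    exact Real.iSup_nonneg fun v => div_nonneg (sq_nonneg _) (by simpa using (hA.dotProduct_mulVec_pos v.2).le)
  · have hAv0 : A.mulVec (A⁻¹.mulVec u) = u := by
      rw [mulVec_mulVec, Matrix.mul_nonsing_inv _ hA.det_pos.ne'.isUnit, one_mulVec]
    have hv0ne : A⁻¹.mulVec u ≠ 0 := fun h => hu (by rw [← hAv0, h, mulVec_zero])
    have hval : ((A⁻¹.mulVec u) ⬝ᵥ u) ^ 2 / ((A⁻¹.mulVec u) ⬝ᵥ A.mulVec (A⁻¹.mulVec u)) =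
        u ⬝ᵥ A⁻¹.mulVec u := by
      have h1 : (A⁻¹.mulVec u) ⬝ᵥ u = u ⬝ᵥ A⁻¹.mulVec u := dotProduct_comm _ _
      have h2 : (A⁻¹.mulVec u) ⬝ᵥ A.mulVec (A⁻¹.mulVec u) = u ⬝ᵥ A⁻¹.mulVec u := by
        rw [hAv0]; exact dotProduct_comm _ _
      have hpos : 0 < u ⬝ᵥ A⁻¹.mulVec u := by simpa using hA.inv.dotProduct_mulVec_pos hu
      rw [h1, h2, sq]
      field_simp
    rw [← hval]
    exact le_ciSup hbdd ⟨A⁻¹.mulVec u, hv0ne⟩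

/-- With `S` SPD, `B Bᵀ = 2I`, `F := B S⁻¹ Bᵀ` and `M := (1/4) B S Bᵀ`, one has for
every `λ`:
`λᵀ M⁻¹ λ = 4 sup_{w≠0} (wᵀBᵀλ)²/‖BᵀBw‖²_S ≤ sup_{v≠0} (vᵀBᵀλ)²/‖v‖²_S = λᵀ F λ`,
i.e. `M⁻¹ ≤ F` in the Loewner order. -/
theorem stmt13 (m n : ℕ) (S : Matrix (Fin n) (Fin n) ℝ) (hS : S.PosDef)
    (B : Matrix (Fin m) (Fin n) ℝ) (hB : B * B.transpose = (2 : ℝ) • 1) :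
    (∀ lam : Fin m → ℝ,
      lam ⬝ᵥ ((((1:ℝ)/4) • (B * S * B.transpose))⁻¹).mulVec lam =
        4 * (⨆ w : {w : Fin n → ℝ // w ≠ 0},
          (w.1 ⬝ᵥ B.transpose.mulVec lam) ^ 2 /
            Snorm2 S ((B.transpose * B).mulVec w.1)) ∧
      4 * (⨆ w : {w : Fin n → ℝ // w ≠ 0},
          (w.1 ⬝ᵥ B.transpose.mulVec lam) ^ 2 /
            Snorm2 S ((B.transpose * B).mulVec w.1)) ≤
        (⨆ v : {v : Fin n → ℝ // v ≠ 0},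
          (v.1 ⬝ᵥ B.transpose.mulVec lam) ^ 2 / Snorm2 S v.1) ∧
      (⨆ v : {v : Fin n → ℝ // v ≠ 0},
          (v.1 ⬝ᵥ B.transpose.mulVec lam) ^ 2 / Snorm2 S v.1) =
        lam ⬝ᵥ (B * S⁻¹ * B.transpose).mulVec lam) ∧
    ((B * S⁻¹ * B.transpose) - (((1:ℝ)/4) • (B * S * B.transpose))⁻¹).PosSemidef := by
  -- basic facts
  have hBBt : ∀ μ : Fin m → ℝ, B.mulVec (B.transpose.mulVec μ) = (2:ℝ) • μ := by
    intro μ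
    rw [mulVec_mulVec, hB, smul_mulVec, one_mulVec]
  have hBtne : ∀ μ : Fin m → ℝ, μ ≠ 0 → B.transpose.mulVec μ ≠ 0 := by
    intro μ hμ h
    apply hμ
    have h2 := hBBt μ
    rw [h, mulVec_zero] at h2
    have := (smul_eq_zero.mp h2.symm).resolve_left (by norm_num)
    exact this
  have quad_eq : ∀ (T : Matrix (Fin n) (Fin n) ℝ) (μ : Fin m → ℝ),
      μ ⬝ᵥ (B * T * B.transpose).mulVec μ =
        (B.transpose.mulVec μ) ⬝ᵥ T.mulVec (B.transpose.mulVec μ) := by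
    intro T μ
    rw [Matrix.mul_assoc, ← mulVec_mulVec, ← mulVec_mulVec, dotProduct_mulVec,
      ← mulVec_transpose]
  have hA1 : (B * S * B.transpose).PosDef := by
    refine Matrix.PosDef.of_dotProduct_mulVec_pos ?_ ?_
    · have := isHermitian_mul_mul_conjTranspose B hS.1
      simpa [conjTranspose_eq_transpose_of_trivial] using this
    · intro μ hμ
      have := hS.dotProduct_mulVec_pos (hBtne μ hμ)
      simpa [star_trivial, quad_eq S μ] using this
  have hMinv : (((1:ℝ)/4) • (B * S * B.transpose))⁻¹ = (4:ℝ) • (B * S * B.transpose)⁻¹ := by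
    apply Matrix.inv_eq_right_inv
    rw [Matrix.smul_mul, Matrix.mul_smul, smul_smul,
      Matrix.mul_nonsing_inv _ hA1.det_pos.ne'.isUnit]
    norm_num
  have key : ∀ lam : Fin m → ℝ,
      lam ⬝ᵥ ((((1:ℝ)/4) • (B * S * B.transpose))⁻¹).mulVec lam =
        4 * (⨆ w : {w : Fin n → ℝ // w ≠ 0},
          (w.1 ⬝ᵥ B.transpose.mulVec lam) ^ 2 /
            Snorm2 S ((B.transpose * B).mulVec w.1)) ∧
      4 * (⨆ w : {w : Fin n → ℝ // w ≠ 0},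
          (w.1 ⬝ᵥ B.transpose.mulVec lam) ^ 2 /
            Snorm2 S ((B.transpose * B).mulVec w.1)) ≤
        (⨆ v : {v : Fin n → ℝ // v ≠ 0},
          (v.1 ⬝ᵥ B.transpose.mulVec lam) ^ 2 / Snorm2 S v.1) ∧
      (⨆ v : {v : Fin n → ℝ // v ≠ 0},
          (v.1 ⬝ᵥ B.transpose.mulVec lam) ^ 2 / Snorm2 S v.1) =
        lam ⬝ᵥ (B * S⁻¹ * B.transpose).mulVec lam := by
    intro lam
    -- pointwise substitution identity
    have hfg : ∀ w : Fin n → ℝ,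
        (w ⬝ᵥ B.transpose.mulVec lam) ^ 2 / Snorm2 S ((B.transpose * B).mulVec w) =
        ((B.mulVec w) ⬝ᵥ lam) ^ 2 /
          ((B.mulVec w) ⬝ᵥ (B * S * B.transpose).mulVec (B.mulVec w)) := by
      intro w
      have hnum : w ⬝ᵥ B.transpose.mulVec lam = (B.mulVec w) ⬝ᵥ lam := by
        rw [dotProduct_mulVec, vecMul_transpose]
      have hden : Snorm2 S ((B.transpose * B).mulVec w) =
          (B.mulVec w) ⬝ᵥ (B * S * B.transpose).mulVec (B.mulVec w) := by
        rw [quad_eq S (B.mulVec w), Snorm2, ← mulVec_mulVec]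
      rw [hnum, hden]
    -- nonnegativity and bounds
    have hgnn : ∀ μ : Fin m → ℝ,
        0 ≤ (μ ⬝ᵥ lam) ^ 2 / (μ ⬝ᵥ (B * S * B.transpose).mulVec μ) := fun μ =>
      div_nonneg (sq_nonneg _) (by simpa using hA1.posSemidef.dotProduct_mulVec_nonneg μ)
    have hgbdd : BddAbove (Set.range fun μ : {μ : Fin m → ℝ // μ ≠ 0} =>
        (μ.1 ⬝ᵥ lam) ^ 2 / (μ.1 ⬝ᵥ (B * S * B.transpose).mulVec μ.1)) := by
      refine ⟨lam ⬝ᵥ (B * S * B.transpose)⁻¹.mulVec lam, ?_⟩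
      rintro x ⟨μ, rfl⟩
      exact rayleigh_bound hA1 lam μ.1
    have hfbdd : BddAbove (Set.range fun w : {w : Fin n → ℝ // w ≠ 0} =>
        (w.1 ⬝ᵥ B.transpose.mulVec lam) ^ 2 / Snorm2 S ((B.transpose * B).mulVec w.1)) := by
      refine ⟨lam ⬝ᵥ (B * S * B.transpose)⁻¹.mulVec lam, ?_⟩
      rintro x ⟨w, rfl⟩
      dsimp only
      rw [hfg w.1]
      exact rayleigh_bound hA1 lam _
    have hfnn : ∀ w : Fin n → ℝ,
        0 ≤ (w ⬝ᵥ B.transpose.mulVec lam) ^ 2 / Snorm2 S ((B.transpose * B).mulVec w) := by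
      intro w; rw [hfg w]; exact hgnn _
    -- the substitution for suprema
    have hsub : (⨆ w : {w : Fin n → ℝ // w ≠ 0},
        (w.1 ⬝ᵥ B.transpose.mulVec lam) ^ 2 / Snorm2 S ((B.transpose * B).mulVec w.1)) =
        ⨆ μ : {μ : Fin m → ℝ // μ ≠ 0},
          (μ.1 ⬝ᵥ lam) ^ 2 / (μ.1 ⬝ᵥ (B * S * B.transpose).mulVec μ.1) := by
      apply le_antisymm
      · refine Real.iSup_le (fun w => ?_) (Real.iSup_nonneg fun μ => hgnn μ.1)
        rw [hfg w.1]
        rcases eq_or_ne (B.mulVec w.1) 0 with h | h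
        · rw [h]
          simpa using Real.iSup_nonneg fun μ : {μ : Fin m → ℝ // μ ≠ 0} => hgnn μ.1
        · exact le_ciSup hgbdd ⟨B.mulVec w.1, h⟩
      · refine Real.iSup_le (fun μ => ?_) (Real.iSup_nonneg fun w => hfnn w.1)
        have hw : B.mulVec ((2:ℝ)⁻¹ • B.transpose.mulVec μ.1) = μ.1 := by
          rw [mulVec_smul, hBBt, smul_smul]
          norm_num
        have hw0 : (2:ℝ)⁻¹ • B.transpose.mulVec μ.1 ≠ 0 := by
          intro h; apply μ.2; rw [← hw, h, mulVec_zero]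
        have hval : ((((2:ℝ)⁻¹ • B.transpose.mulVec μ.1)) ⬝ᵥ B.transpose.mulVec lam) ^ 2 /
            Snorm2 S ((B.transpose * B).mulVec ((2:ℝ)⁻¹ • B.transpose.mulVec μ.1)) =
            (μ.1 ⬝ᵥ lam) ^ 2 / (μ.1 ⬝ᵥ (B * S * B.transpose).mulVec μ.1) := by
          rw [hfg, hw]
        rw [← hval]
        exact le_ciSup hfbdd ⟨_, hw0⟩
    -- part 1
    have h1 : lam ⬝ᵥ ((((1:ℝ)/4) • (B * S * B.transpose))⁻¹).mulVec lam =
        4 * (⨆ w : {w : Fin n → ℝ // w ≠ 0},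
          (w.1 ⬝ᵥ B.transpose.mulVec lam) ^ 2 /
            Snorm2 S ((B.transpose * B).mulVec w.1)) := by
      rw [hMinv, smul_mulVec, dotProduct_smul, smul_eq_mul, hsub,
        rayleigh_sup hA1 lam]
    -- part 3
    have h3 : (⨆ v : {v : Fin n → ℝ // v ≠ 0},
        (v.1 ⬝ᵥ B.transpose.mulVec lam) ^ 2 / Snorm2 S v.1) =
        lam ⬝ᵥ (B * S⁻¹ * B.transpose).mulVec lam := by
      have := rayleigh_sup hS (B.transpose.mulVec lam)
      simp only [Snorm2]
      rw [this, quad_eq S⁻¹ lam]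
    -- part 2
    have hhnn : ∀ v : Fin n → ℝ,
        0 ≤ (v ⬝ᵥ B.transpose.mulVec lam) ^ 2 / Snorm2 S v :=
      fun v => div_nonneg (sq_nonneg _) (by simpa [Snorm2] using hS.posSemidef.dotProduct_mulVec_nonneg v)
    have hsupv_nn : 0 ≤ ⨆ v : {v : Fin n → ℝ // v ≠ 0},
        (v.1 ⬝ᵥ B.transpose.mulVec lam) ^ 2 / Snorm2 S v.1 :=
      Real.iSup_nonneg fun v => hhnn v.1
    have hhbdd : BddAbove (Set.range fun v : {v : Fin n → ℝ // v ≠ 0} =>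
        (v.1 ⬝ᵥ B.transpose.mulVec lam) ^ 2 / Snorm2 S v.1) := by
      refine ⟨(B.transpose.mulVec lam) ⬝ᵥ S⁻¹.mulVec (B.transpose.mulVec lam), ?_⟩
      rintro x ⟨v, rfl⟩
      exact rayleigh_bound hS (B.transpose.mulVec lam) v.1
    have h2 : 4 * (⨆ w : {w : Fin n → ℝ // w ≠ 0},
          (w.1 ⬝ᵥ B.transpose.mulVec lam) ^ 2 /
            Snorm2 S ((B.transpose * B).mulVec w.1)) ≤
        (⨆ v : {v : Fin n → ℝ // v ≠ 0},
          (v.1 ⬝ᵥ B.transpose.mulVec lam) ^ 2 / Snorm2 S v.1) := by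
      have hle : (⨆ w : {w : Fin n → ℝ // w ≠ 0},
          (w.1 ⬝ᵥ B.transpose.mulVec lam) ^ 2 /
            Snorm2 S ((B.transpose * B).mulVec w.1)) ≤
          (⨆ v : {v : Fin n → ℝ // v ≠ 0},
            (v.1 ⬝ᵥ B.transpose.mulVec lam) ^ 2 / Snorm2 S v.1) / 4 := by
        refine Real.iSup_le (fun w => ?_) (by linarith)
        rw [le_div_iff₀ (by norm_num : (0:ℝ) < 4)]
        have hBBtB : B.mulVec ((B.transpose * B).mulVec w.1) = (2:ℝ) • B.mulVec w.1 := by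
          rw [mulVec_mulVec, ← Matrix.mul_assoc, hB, Matrix.smul_mul, Matrix.one_mul,
            smul_mulVec]
        rcases eq_or_ne ((B.transpose * B).mulVec w.1) 0 with h | h
        · have hBw : B.mulVec w.1 = 0 := by
            have h2' := hBBtB
            rw [h, mulVec_zero] at h2'
            exact (smul_eq_zero.mp h2'.symm).resolve_left (by norm_num)
          have hnum0 : w.1 ⬝ᵥ B.transpose.mulVec lam = 0 := by
            rw [dotProduct_mulVec, vecMul_transpose, hBw, zero_dotProduct]
          rw [hnum0]
          simpa using hsupv_nn
        · have hnum : ((B.transpose * B).mulVec w.1) ⬝ᵥ B.transpose.mulVec lam =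
              2 * (w.1 ⬝ᵥ B.transpose.mulVec lam) := by
            rw [dotProduct_mulVec, vecMul_transpose, hBBtB, smul_dotProduct, smul_eq_mul,
              dotProduct_mulVec, vecMul_transpose]
          have hvval : ((w.1 ⬝ᵥ B.transpose.mulVec lam) ^ 2 /
              Snorm2 S ((B.transpose * B).mulVec w.1)) * 4 =
              (((B.transpose * B).mulVec w.1) ⬝ᵥ B.transpose.mulVec lam) ^ 2 /
                Snorm2 S ((B.transpose * B).mulVec w.1) := by
            rw [hnum, mul_pow]
            ring_nf
          rw [hvval]
          exact le_ciSup hhbdd ⟨_, h⟩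
      linarith
    exact ⟨h1, h2, h3⟩
  refine ⟨key, ?_⟩
  have hermF : (B * S⁻¹ * B.transpose).IsHermitian := by
    have := isHermitian_mul_mul_conjTranspose B hS.1.inv
    simpa [conjTranspose_eq_transpose_of_trivial] using this
  have hermM : (((1:ℝ)/4) • (B * S * B.transpose)).IsHermitian := by
    have h' : (((1:ℝ)/4) • (B * S * B.transpose))ᴴ = ((1:ℝ)/4) • (B * S * B.transpose) := by
      rw [conjTranspose_smul, hA1.1.eq, star_trivial]
    exact h'
  refine Matrix.PosSemidef.of_dotProduct_mulVec_nonneg (hermF.sub hermM.inv) fun x => ?_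
  obtain ⟨e1, le2, e3⟩ := key x
  have hle : x ⬝ᵥ ((((1:ℝ)/4) • (B * S * B.transpose))⁻¹).mulVec x ≤
      x ⬝ᵥ (B * S⁻¹ * B.transpose).mulVec x := by
    rw [e1, ← e3]; exact le2
  simpa [sub_mulVec, dotProduct_sub] using sub_nonneg.mpr hle
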